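/- Let p be an odd positive integer, let G be a finite simple graph, and set q = wcol_p(G). Then the chromatic number of the exact distance-p graph of G satisfies χ(G^[♮p]) ≤ (⌊p/2⌋+2)^q. -/

import Mathlib

open SimpleGraph

variable {V : Type*}

/-- The exact distance-`p` graph: distinct vertices adjacent iff their distance in `G` is exactly `p`. -/
def exactDistanceGraph (G : SimpleGraph V) (p : ℕ) : SimpleGraph V where
  Adj x y := x ≠ y ∧ G.Reachable x y ∧ G.dist x y = p
  symm := by
    refine ⟨?_⟩
    rintro x y ⟨h1, h2, h3⟩
    exact ⟨h1.symm, h2.symm, by rwa [SimpleGraph.dist_comm]⟩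
  loopless := by refine ⟨?_⟩; rintro x ⟨h1, -, -⟩; exact h1 rfl

/-- `x` is weakly `k`-accessible from `y` w.r.t. the linear order `L`. -/
def WeaklyAccessible (G : SimpleGraph V) (L : LinearOrder V) (k : ℕ) (x y : V) : Prop :=
  L.lt x y ∧ ∃ w : G.Walk x y, w.IsPath ∧ w.length ≤ k ∧
    ∀ z ∈ w.support, z ≠ x → z ≠ y → L.lt x z

/-- The weak `k`-colouring number. -/
noncomputable def wcol (G : SimpleGraph V) (k : ℕ) : ℕ :=
  1 + sInf { m : ℕ | ∃ L : LinearOrder V, ∀ y : V,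
      {x : V | WeaklyAccessible G L k x y}.ncard ≤ m }

section Aux

variable {W : Type*} [Lo : LinearOrder W] (G : SimpleGraph W)

/-- Lengths of walks from `x` to `y` whose internal vertices are all above `x`. -/
def goodSet (x y : W) : Set ℕ :=
  {n | ∃ w : G.Walk x y, w.length = n ∧ ∀ z ∈ w.support, z ≠ x → z ≠ y → x < z}

noncomputable def wdist (x y : W) : ℕ := sInf (goodSet G x y)

lemma weaklyAccessible_of_walk [DecidableEq W] {k : ℕ} {x y : W} (hxy : x < y) (w : G.Walk x y)
    (hlen : w.length ≤ k) (hint : ∀ z ∈ w.support, z ≠ x → z ≠ y → x < z) :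
    WeaklyAccessible G Lo k x y :=
  ⟨hxy, w.bypass, Walk.bypass_isPath w, (Walk.length_bypass_le w).trans hlen,
    fun z hz hzx hzy => hint z (Walk.support_bypass_subset w hz) hzx hzy⟩

lemma wa_lt {k : ℕ} {x y : W} (h : WeaklyAccessible G Lo k x y) : x < y := h.1

lemma goodSet_of_wa {k : ℕ} {x y : W} (h : WeaklyAccessible G Lo k x y) :
    ∃ n ∈ goodSet G x y, n ≤ k := by
  obtain ⟨-, w, -, hlen, hint⟩ := h
  exact ⟨w.length, ⟨w, rfl, hint⟩, hlen⟩

lemma wdist_le {x y : W} {n : ℕ} (h : n ∈ goodSet G x y) : wdist G x y ≤ n := Nat.sInf_le h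

lemma wdist_self (x : W) : wdist G x x = 0 := by
  have h0 : (0 : ℕ) ∈ goodSet G x x :=
    ⟨Walk.nil, rfl, by intro z hz hzx _; simp [Walk.support_nil] at hz; exact absurd hz hzx⟩
  exact Nat.le_zero.mp (Nat.sInf_le h0)

lemma exists_walk_wdist {x y : W} (h : (goodSet G x y).Nonempty) :
    ∃ w : G.Walk x y, w.length = wdist G x y ∧ ∀ z ∈ w.support, z ≠ x → z ≠ y → x < z :=
  Nat.sInf_mem h

lemma dist_le_of_goodSet {x y : W} {n : ℕ} (h : n ∈ goodSet G x y) : G.dist x y ≤ n := by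
  obtain ⟨w, hw, -⟩ := h
  exact hw ▸ SimpleGraph.dist_le w

/-- Greedy colouring of the weak-accessibility digraph. -/
lemma exists_rho [Fintype W] (p q m : ℕ)
    (hm : ∀ y : W, {x : W | WeaklyAccessible G Lo p x y}.ncard ≤ m) (hmq : m < q) :
    ∃ ρ : W → Fin q, ∀ x y : W, WeaklyAccessible G Lo p x y → ρ x ≠ ρ y := by
  classical
  suffices h : ∀ n (s : Finset W), s.card = n → ∃ ρ : W → Fin q,
      ∀ x y : W, y ∈ s → WeaklyAccessible G Lo p x y → ρ x ≠ ρ y by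
    obtain ⟨ρ, hρ⟩ := h _ Finset.univ rfl
    exact ⟨ρ, fun x y hxy => hρ x y (Finset.mem_univ y) hxy⟩
  intro n
  induction n with
  | zero =>
    intro s hs
    refine ⟨fun _ => ⟨0, Nat.lt_of_le_of_lt (Nat.zero_le m) hmq⟩, fun x y hy _ => ?_⟩
    rw [Finset.card_eq_zero] at hs
    simp [hs] at hy
  | succ n ih =>
    intro s hs
    have hne : s.Nonempty := Finset.card_pos.mp (by omega)
    set y0 := s.max' hne with hy0
    obtain ⟨ρ', hρ'⟩ := ih (s.erase y0)
      (by rw [Finset.card_erase_of_mem (s.max'_mem hne)]; omega)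
    set Qf : Finset W := Finset.univ.filter (fun x => WeaklyAccessible G Lo p x y0) with hQf
    have hQcard : Qf.card ≤ m := by
      have hbound := hm y0
      have hset : {x : W | WeaklyAccessible G Lo p x y0} = ↑Qf := by
        ext z; simp [hQf]
      rwa [hset, Set.ncard_coe_finset] at hbound
    have hused : (Qf.image ρ').card ≤ m := Finset.card_image_le.trans hQcard
    have hfresh : (Finset.univ \ Qf.image ρ').Nonempty := by
      rw [← Finset.card_pos]
      have h1 := Finset.le_card_sdiff (Qf.image ρ') (Finset.univ : Finset (Fin q))
      rw [Finset.card_univ, Fintype.card_fin] at h1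
      omega
    obtain ⟨c, hc⟩ := hfresh
    rw [Finset.mem_sdiff] at hc
    refine ⟨Function.update ρ' y0 c, fun x y hy hxy => ?_⟩
    have hxlty : x < y := hxy.1
    have hyle : y ≤ y0 := s.le_max' y hy
    have hxney0 : x ≠ y0 := ne_of_lt (lt_of_lt_of_le hxlty hyle)
    rcases eq_or_ne y y0 with rfl | hyne
    · rw [Function.update_self, Function.update_of_ne hxney0]
      intro heq
      exact hc.2 (Finset.mem_image.mpr ⟨x, by simp [hQf, hxy], heq.symm ▸ rfl⟩)
    · rw [Function.update_of_ne hxney0, Function.update_of_ne hyne]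
      exact hρ' x y (Finset.mem_erase.mpr ⟨hyne, hy⟩) hxy

/-- Elements of `{v} ∪ Q_s(v)` with `2s ≤ p` get pairwise distinct `ρ`-values. -/
lemma wa_append [DecidableEq W] {kp : ℕ} {x1 x2 a : W} (hx12 : x1 < x2) (hx1a : x1 < a)
    (hx2a : x2 < a) (w1 : G.Walk x1 a) (w2 : G.Walk x2 a)
    (h1 : ∀ z ∈ w1.support, z ≠ x1 → z ≠ a → x1 < z)
    (h2 : ∀ z ∈ w2.support, z ≠ x2 → z ≠ a → x2 < z)
    (hlen : w1.length + w2.length ≤ kp) :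
    WeaklyAccessible G Lo kp x1 x2 := by
  apply weaklyAccessible_of_walk G hx12 (w1.append w2.reverse)
  · rw [Walk.length_append, Walk.length_reverse]; exact hlen
  · intro z hz hzx1 hzx2
    rw [Walk.mem_support_append_iff] at hz
    rcases hz with hz | hz
    · rcases eq_or_ne z a with rfl | hza
      · exact hx1a
      · exact h1 z hz hzx1 hza
    · rw [Walk.support_reverse, List.mem_reverse] at hz
      rcases eq_or_ne z a with rfl | hza
      · exact hx1a
      · exact hx12.trans (h2 z hz hzx2 hza)

lemma mem_rho_inj [DecidableEq W] {p q s : ℕ} (hsp : 2 * s ≤ p) {ρ : W → Fin q}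
    (hρ : ∀ x y, WeaklyAccessible G Lo p x y → ρ x ≠ ρ y) {v x1 x2 : W}
    (h1 : x1 = v ∨ WeaklyAccessible G Lo s x1 v) (h2 : x2 = v ∨ WeaklyAccessible G Lo s x2 v)
    (hρeq : ρ x1 = ρ x2) : x1 = x2 := by
  have key : ∀ y1 y2 : W, (y1 = v ∨ WeaklyAccessible G Lo s y1 v) →
      (y2 = v ∨ WeaklyAccessible G Lo s y2 v) → y1 < y2 → WeaklyAccessible G Lo p y1 y2 := by
    intro y1 y2 hh1 hh2 hlt
    have hy1 : WeaklyAccessible G Lo s y1 v := by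
      rcases hh1 with rfl | h
      · rcases hh2 with rfl | h
        · exact absurd hlt (lt_irrefl _)
        · exact absurd (h.1.trans hlt) (lt_irrefl _)
      · exact h
    obtain ⟨hlt1, w1, -, hlen1, hint1⟩ := hy1
    rcases hh2 with rfl | hy2
    · exact weaklyAccessible_of_walk G hlt w1 (hlen1.trans (by omega)) hint1
    · obtain ⟨hlt2, w2, -, hlen2, hint2⟩ := hy2
      exact wa_append G hlt hlt1 hlt2 w1 w2 hint1 hint2 (by omega)
  by_contra hne
  rcases lt_or_gt_of_ne hne with hlt | hlt
  · exact hρ x1 x2 (key x1 x2 h1 h2 hlt) hρeq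
  · exact hρ x2 x1 (key x2 x1 h2 h1 hlt) hρeq.symm

noncomputable def code {q : ℕ} (ρ : W → Fin q) (s : ℕ) (v : W) (i : Fin q) : ℕ :=
  sInf ((fun x => wdist G x v + 1) ''
    {x | (x = v ∨ WeaklyAccessible G Lo s x v) ∧ ρ x = i})

lemma wdist_le_s {s : ℕ} {x v : W} (h : x = v ∨ WeaklyAccessible G Lo s x v) :
    wdist G x v ≤ s := by
  rcases h with rfl | h
  · simp [wdist_self]
  · obtain ⟨n, hn, hns⟩ := goodSet_of_wa G h
    exact (wdist_le G hn).trans hns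

lemma code_lt {q : ℕ} (ρ : W → Fin q) (s : ℕ) (v : W) (i : Fin q) :
    code G ρ s v i < s + 2 := by
  rcases Set.eq_empty_or_nonempty
    ((fun x => wdist G x v + 1) '' {x | (x = v ∨ WeaklyAccessible G Lo s x v) ∧ ρ x = i}) with
    he | hne
  · rw [code, he, Nat.sInf_empty]; omega
  · obtain ⟨n, hn⟩ := hne
    have hle : code G ρ s v i ≤ n := Nat.sInf_le hn
    obtain ⟨x, ⟨hx, -⟩, hxn⟩ := hn
    have hxn' : wdist G x v + 1 = n := hxn
    have := wdist_le_s G hx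
    omega

lemma code_eq_of_mem [DecidableEq W] {p q s : ℕ} (hsp : 2 * s ≤ p) {ρ : W → Fin q}
    (hρ : ∀ x y, WeaklyAccessible G Lo p x y → ρ x ≠ ρ y) {v x0 : W}
    (h0 : x0 = v ∨ WeaklyAccessible G Lo s x0 v) :
    code G ρ s v (ρ x0) = wdist G x0 v + 1 := by
  have hmem : wdist G x0 v + 1 ∈ (fun x => wdist G x v + 1) ''
      {x | (x = v ∨ WeaklyAccessible G Lo s x v) ∧ ρ x = ρ x0} := ⟨x0, ⟨h0, rfl⟩, rfl⟩
  have hinf := Nat.sInf_mem ⟨_, hmem⟩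
  obtain ⟨x1, ⟨h1, hρ1⟩, hval⟩ := hinf
  have hx10 : x1 = x0 := mem_rho_inj G hsp hρ h1 h0 hρ1
  have hval' : wdist G x1 v + 1 = code G ρ s v (ρ x0) := hval
  rw [← hval', hx10]

lemma code_extract {q s : ℕ} {ρ : W → Fin q} {v : W} {i : Fin q} {k : ℕ}
    (h : code G ρ s v i = k + 1) :
    ∃ x, (x = v ∨ WeaklyAccessible G Lo s x v) ∧ ρ x = i ∧ wdist G x v = k := by
  have hne : ((fun x => wdist G x v + 1) ''
      {x | (x = v ∨ WeaklyAccessible G Lo s x v) ∧ ρ x = i}).Nonempty := by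
    rcases Set.eq_empty_or_nonempty ((fun x => wdist G x v + 1) ''
        {x | (x = v ∨ WeaklyAccessible G Lo s x v) ∧ ρ x = i}) with he | hne
    · rw [code, he, Nat.sInf_empty] at h; omega
    · exact hne
  have hinf := Nat.sInf_mem hne
  rw [show sInf _ = code G ρ s v i from rfl, h] at hinf
  obtain ⟨x, ⟨hx, hρx⟩, hval⟩ := hinf
  have hval' : wdist G x v + 1 = k + 1 := hval
  exact ⟨x, hx, hρx, by omega⟩

/-- The key properness lemma. -/
lemma code_ne [DecidableEq W] {p q s : ℕ} (hps : p = 2 * s + 1)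
    {ρ : W → Fin q} (hρ : ∀ x y, WeaklyAccessible G Lo p x y → ρ x ≠ ρ y)
    {u v : W} (huv : u < v) (hreach : G.Reachable u v) (hdist : G.dist u v = p) :
    ∃ i, code G ρ s u i ≠ code G ρ s v i := by
  have hsp : 2 * s ≤ p := by omega
  obtain ⟨w, -, hwlen⟩ := hreach.exists_path_of_dist
  rw [hdist] at hwlen
  have hune : (w.support.toFinset : Finset W).Nonempty := ⟨u, by simp⟩
  set x := w.support.toFinset.min' hune with hxdef
  have hxmem : x ∈ w.support := by
    have := w.support.toFinset.min'_mem hune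
    simpa using this
  have hxlt : ∀ z ∈ w.support, z ≠ x → x < z := by
    intro z hz hzx
    exact lt_of_le_of_ne (w.support.toFinset.min'_le z (by simpa using hz)) (Ne.symm hzx)
  set w1 := w.takeUntil x hxmem with hw1def
  set w2 := w.dropUntil x hxmem with hw2def
  have hsum : w1.length + w2.length = p := by
    have hspec := w.take_spec hxmem
    have := congrArg Walk.length hspec
    rw [Walk.length_append] at this
    rw [hw1def, hw2def, this, hwlen]
  have hs1 : ∀ z ∈ w1.support, z ∈ w.support := fun z hz =>
    w.support_takeUntil_subset hxmem hz
  have hs2 : ∀ z ∈ w2.support, z ∈ w.support := fun z hz =>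
    w.support_dropUntil_subset hxmem hz
  have hint1 : ∀ z ∈ w1.reverse.support, z ≠ x → z ≠ u → x < z := by
    intro z hz hzx _
    rw [Walk.support_reverse, List.mem_reverse] at hz
    exact hxlt z (hs1 z hz) hzx
  have hint2 : ∀ z ∈ w2.support, z ≠ x → z ≠ v → x < z := by
    intro z hz hzx _
    exact hxlt z (hs2 z hz) hzx
  have hxleu : x ≤ u := w.support.toFinset.min'_le u (by simp)
  have hxltv : x < v := lt_of_le_of_lt hxleu huv
  -- distances along the split
  have hdxu_le : G.dist x u ≤ w1.length := by
    have := SimpleGraph.dist_le w1.reverse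
    rwa [Walk.length_reverse] at this
  have hdxv_le : G.dist x v ≤ w2.length := SimpleGraph.dist_le w2
  have hdxu_ge : w1.length ≤ G.dist x u := by
    obtain ⟨wd, -, hwd⟩ := (w1.reverse.reachable).exists_path_of_dist
    have := SimpleGraph.dist_le (wd.reverse.append w2)
    rw [Walk.length_append, Walk.length_reverse, hwd, hdist] at this
    omega
  have hdxv_ge : w2.length ≤ G.dist x v := by
    obtain ⟨we, -, hwe⟩ := (w2.reachable).exists_path_of_dist
    have := SimpleGraph.dist_le (w1.append we)
    rw [Walk.length_append, hwe, hdist] at this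
    omega
  have hdxu : G.dist x u = w1.length := le_antisymm hdxu_le hdxu_ge
  have hdxv : G.dist x v = w2.length := le_antisymm hdxv_le hdxv_ge
  clear hw1def hw2def hxdef
  clear_value w1 w2
  clear_value x
  rcases le_or_gt w1.length s with hA | hB
  · -- Case A : dist x u ≤ s
    have hbs : s + 1 ≤ w2.length := by omega
    have hxTu : x = u ∨ WeaklyAccessible G Lo s x u := by
      rcases eq_or_ne x u with rfl | hne
      · exact Or.inl rfl
      · refine Or.inr (weaklyAccessible_of_walk G (hxlt u w.start_mem_support (Ne.symm hne))
          w1.reverse (by rw [Walk.length_reverse]; exact hA) hint1)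
    have hwdxu : wdist G x u = w1.length := by
      have hgood : w1.length ∈ goodSet G x u :=
        ⟨w1.reverse, Walk.length_reverse w1, hint1⟩
      refine le_antisymm (wdist_le G hgood) ?_
      obtain ⟨w', hw', -⟩ := exists_walk_wdist G ⟨_, hgood⟩
      have := SimpleGraph.dist_le w'
      omega
    refine ⟨ρ x, ?_⟩
    rw [code_eq_of_mem G hsp hρ hxTu, hwdxu]
    intro heq
    obtain ⟨x'', hx''T, hρx'', hwd''⟩ := code_extract G heq.symm
    rcases hx''T with heqv | hwa''
    · -- x'' = v
      rw [heqv, wdist_self] at hwd''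
      rw [heqv] at hρx''
      have hxu : x = u := Walk.eq_of_length_eq_zero (by omega : w1.length = 0) |>.symm
      have hwauv : WeaklyAccessible G Lo p u v := by
        refine weaklyAccessible_of_walk G huv w (le_of_eq hwlen) ?_
        intro z hz hzu _
        have := hxlt z hz (by rw [hxu]; exact hzu)
        rwa [hxu] at this
      exact hρ u v hwauv (by rw [hρx'', hxu])
    · rcases eq_or_ne x'' x with rfl | hnex
      · obtain ⟨n, hn, hns⟩ := goodSet_of_wa G hwa''
        have := dist_le_of_goodSet G hn
        omega
      · have hx''v : x'' < v := hwa''.1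
        obtain ⟨n0, hn0, -⟩ := goodSet_of_wa G hwa''
        obtain ⟨w3, hw3len, hw3int⟩ := exists_walk_wdist G ⟨n0, hn0⟩
        rw [hwd''] at hw3len
        rcases lt_or_gt_of_ne hnex with hlt | hlt
        · -- x'' < x
          have : WeaklyAccessible G Lo p x'' x :=
            wa_append G hlt hx''v hxltv w3 w2 hw3int hint2 (by omega)
          exact hρ x'' x this hρx''
        · -- x < x''
          have : WeaklyAccessible G Lo p x x'' :=
            wa_append G hlt hxltv hx''v w2 w3 hint2 hw3int (by omega)
          exact hρ x x'' this hρx''.symm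
  · -- Case B : dist x v ≤ s
    have hbs : w2.length ≤ s := by omega
    have hxneu : x ≠ u := by
      intro h
      subst h
      rw [SimpleGraph.dist_self] at hdxu
      omega
    have hxltu : x < u := hxlt u w.start_mem_support (Ne.symm hxneu)
    have hxTv : WeaklyAccessible G Lo s x v :=
      weaklyAccessible_of_walk G hxltv w2 hbs hint2
    have hwdxv : wdist G x v = w2.length := by
      have hgood : w2.length ∈ goodSet G x v := ⟨w2, rfl, hint2⟩
      refine le_antisymm (wdist_le G hgood) ?_
      obtain ⟨w', hw', -⟩ := exists_walk_wdist G ⟨_, hgood⟩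
      have := SimpleGraph.dist_le w'
      omega
    refine ⟨ρ x, ?_⟩
    rw [code_eq_of_mem G hsp hρ (Or.inr hxTv), hwdxv]
    intro heq
    obtain ⟨x', hx'T, hρx', hwd'⟩ := code_extract G heq
    rcases hx'T with heqv | hwa'
    · -- x' = u
      rw [heqv, wdist_self] at hwd'
      have : x = v := Walk.eq_of_length_eq_zero (by omega : w2.length = 0)
      exact absurd this (ne_of_lt hxltv)
    · rcases eq_or_ne x' x with rfl | hnex
      · obtain ⟨n, hn, hns⟩ := goodSet_of_wa G hwa'
        have := dist_le_of_goodSet G hn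
        omega
      · have hx'u : x' < u := hwa'.1
        obtain ⟨n0, hn0, -⟩ := goodSet_of_wa G hwa'
        obtain ⟨w4, hw4len, hw4int⟩ := exists_walk_wdist G ⟨n0, hn0⟩
        rw [hwd'] at hw4len
        rcases lt_or_gt_of_ne hnex with hlt | hlt
        · -- x' < x
          have : WeaklyAccessible G Lo p x' x :=
            wa_append G hlt hx'u hxltu w4 w1.reverse hw4int hint1
              (by rw [Walk.length_reverse]; omega)
          exact hρ x' x this hρx'
        · -- x < x'
          have : WeaklyAccessible G Lo p x x' :=
            wa_append G hlt hxltu hx'u w1.reverse w4 hint1 hw4int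
              (by rw [Walk.length_reverse]; omega)
          exact hρ x x' this hρx'.symm

end Aux

/-- Theorem 11(a): for odd positive `p`, a finite graph `G`, and `q = wcol_p(G)`,
`χ(G^[♮p]) ≤ (⌊p/2⌋+2)^q`. -/
theorem chromaticNumber_exactDistanceGraph_le_pow_wcol
    [Fintype V] (G : SimpleGraph V) (p : ℕ) (hp : Odd p) (q : ℕ) (hq : q = wcol G p) :
    (exactDistanceGraph G p).chromaticNumber ≤ (((p / 2 + 2) ^ q : ℕ) : ℕ∞) := by
  classical
  obtain ⟨t, ht⟩ := hp
  set s := p / 2 with hs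
  have hps : p = 2 * s + 1 := by omega
  have hSne : { m : ℕ | ∃ L : LinearOrder V, ∀ y : V,
      {x : V | WeaklyAccessible G L p x y}.ncard ≤ m }.Nonempty := by
    refine ⟨Fintype.card V, LinearOrder.lift' (Fintype.equivFin V) (Equiv.injective _),
      fun y => ?_⟩
    calc {x : V | WeaklyAccessible G _ p x y}.ncard
        ≤ (Set.univ : Set V).ncard := Set.ncard_le_ncard (Set.subset_univ _) Set.finite_univ
      _ = Fintype.card V := by rw [Set.ncard_univ, Nat.card_eq_fintype_card]
  rw [wcol] at hq
  set m := sInf { m : ℕ | ∃ L : LinearOrder V, ∀ y : V,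
      {x : V | WeaklyAccessible G L p x y}.ncard ≤ m } with hm
  obtain ⟨L, hL⟩ := Nat.sInf_mem hSne
  letI := L
  have hmq : m < q := by omega
  obtain ⟨ρ, hρ⟩ := exists_rho G p q m hL hmq
  have valid : ∀ {a b : V}, (exactDistanceGraph G p).Adj a b →
      (fun i => (⟨code G ρ s a i, code_lt G ρ s a i⟩ : Fin (s + 2))) ≠
      (fun i => (⟨code G ρ s b i, code_lt G ρ s b i⟩ : Fin (s + 2))) := by
    rintro a b ⟨hne, hre, hd⟩ hcc
    have hcode : ∀ i, code G ρ s a i = code G ρ s b i := fun i =>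
      congrArg Fin.val (congrFun hcc i)
    rcases hne.lt_or_gt with h | h
    · obtain ⟨i, hi⟩ := code_ne G hps hρ h hre hd
      exact hi (hcode i)
    · obtain ⟨i, hi⟩ := code_ne G hps hρ h hre.symm (by rwa [SimpleGraph.dist_comm])
      exact hi (hcode i).symm
  let C : (exactDistanceGraph G p).Coloring (Fin q → Fin (s + 2)) :=
    SimpleGraph.Coloring.mk (fun v i => ⟨code G ρ s v i, code_lt G ρ s v i⟩)
      (fun hab => valid hab)
  have hcol : (exactDistanceGraph G p).Colorable ((s + 2) ^ q) := by
    have := C.colorable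
    rwa [Fintype.card_fun, Fintype.card_fin, Fintype.card_fin] at this
  exact hcol.chromaticNumber_le
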